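/- (Arc-length weighted trace estimate; estimates (s2)–(s3) in the proof of Lemma 1, single-rectangle form.) Under the stated assumptions, the integral of ψ² over the graph Γ_g with respect to 1-dimensional Hausdorff measure satisfies ∫_{Γ_g} ψ² dH¹ ≤ 2·√(1+L²) · ( ∫_{Γ_G} ψ² dH¹ + γ ∫_S ‖∇ψ(x)‖² dx ). -/

import Mathlib

open MeasureTheory Set
open scoped NNReal ENNReal

/-- A point of the Euclidean plane given by its two coordinates. -/
noncomputable def pt2 (a b : ℝ) : EuclideanSpace ℝ (Fin 2) :=
  (WithLp.equiv 2 (Fin 2 → ℝ)).symm ![a, b]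

@[simp] lemma pt2_zero (a b : ℝ) : pt2 a b 0 = a := rfl
@[simp] lemma pt2_one (a b : ℝ) : pt2 a b 1 = b := rfl

lemma pt2_eta (x : EuclideanSpace ℝ (Fin 2)) : pt2 (x 0) (x 1) = x := by
  ext i; fin_cases i <;> rfl

lemma continuous_pt2 : Continuous (fun p : ℝ × ℝ => pt2 p.1 p.2) := by
  refine Continuous.comp ?_ ?_
  · exact PiLp.continuous_toLp 2 (fun _ : Fin 2 => ℝ)
  · exact continuous_pi fun i => by fin_cases i <;> simp <;> fun_prop

lemma dist_pt2 (a b c d : ℝ) :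
    dist (pt2 a b) (pt2 c d) = Real.sqrt ((a - c)^2 + (b - d)^2) := by
  rw [EuclideanSpace.dist_eq]
  simp [Fin.sum_univ_two, Real.dist_eq, sq_abs]

lemma curve_lipschitz {u : ℝ → ℝ} {K : ℝ} (hK : 0 ≤ K) {s : Set ℝ}
    (hu : ∀ x ∈ s, ∀ y ∈ s, |u x - u y| ≤ K * |x - y|) :
    LipschitzOnWith (Real.toNNReal (Real.sqrt (1 + K^2))) (fun t => pt2 t (u t)) s := by
  apply LipschitzOnWith.of_dist_le_mul
  intro x hx y hy
  rw [dist_pt2, Real.coe_toNNReal _ (Real.sqrt_nonneg _), Real.dist_eq]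
  have h1 : |u x - u y| ≤ K * |x - y| := hu x hx y hy
  have h2 : Real.sqrt (1 + K^2) * |x - y| = Real.sqrt ((1 + K^2) * (x-y)^2) := by
    rw [Real.sqrt_mul (by positivity), Real.sqrt_sq_eq_abs]
  rw [h2]
  apply Real.sqrt_le_sqrt
  nlinarith [abs_nonneg (x - y), abs_nonneg (u x - u y), sq_abs (x-y), sq_abs (u x - u y)]

lemma proj_lipschitz : LipschitzWith 1 (fun x : EuclideanSpace ℝ (Fin 2) => x 0) := by
  apply LipschitzWith.of_dist_le_mul
  intro x y
  rw [NNReal.coe_one, one_mul, EuclideanSpace.dist_eq, Real.dist_eq, Fin.sum_univ_two]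
  rw [← Real.sqrt_sq_eq_abs]
  apply Real.sqrt_le_sqrt
  have := sq_nonneg (dist (x 1) (y 1))
  have : dist (x 0) (y 0) ^ 2 = (x 0 - y 0)^2 := by rw [Real.dist_eq, sq_abs]
  nlinarith [sq_nonneg (dist (x 1) (y 1)), Real.dist_eq (x 0) (y 0), sq_abs (x 0 - y 0)]

lemma graph_lintegral_le {u : ℝ → ℝ} (hu : Continuous u) {K : ℝ≥0} {a b : ℝ}
    (hlip : LipschitzOnWith K (fun t => pt2 t (u t)) (Icc a b))
    (q : EuclideanSpace ℝ (Fin 2) → ℝ≥0∞) (hq : Measurable q) :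
    ∫⁻ x in (fun t => pt2 t (u t)) '' Icc a b, q x ∂μH[1]
      ≤ (K : ℝ≥0∞) * ∫⁻ t in Icc a b, q (pt2 t (u t)) := by
  set f : ℝ → EuclideanSpace ℝ (Fin 2) := fun t => pt2 t (u t) with hfdef
  have hf : Continuous f := continuous_pt2.comp (continuous_id.prodMk hu)
  have hmeas : μH[1].restrict (f '' Icc a b)
      ≤ Measure.map f ((K : ℝ≥0∞) • volume.restrict (Icc a b)) := by
    refine Measure.le_iff.2 fun A hA => ?_
    rw [Measure.restrict_apply hA, Measure.map_apply hf.measurable hA,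
      Measure.smul_apply, Measure.restrict_apply (hf.measurable hA)]
    calc μH[1] (A ∩ f '' Icc a b)
        ≤ μH[1] (f '' (f ⁻¹' A ∩ Icc a b)) := by
          apply measure_mono
          rintro x ⟨hxA, t, ht, rfl⟩
          exact ⟨t, ⟨hxA, ht⟩, rfl⟩
      _ ≤ (K : ℝ≥0∞) ^ (1:ℝ) * μH[1] (f ⁻¹' A ∩ Icc a b) :=
          (hlip.mono inter_subset_right).hausdorffMeasure_image_le zero_le_one
      _ = (K : ℝ≥0∞) • volume (f ⁻¹' A ∩ Icc a b) := by
          rw [MeasureTheory.hausdorffMeasure_real, ENNReal.rpow_one]; rfl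
  calc ∫⁻ x in f '' Icc a b, q x ∂μH[1]
      ≤ ∫⁻ x, q x ∂(Measure.map f ((K : ℝ≥0∞) • volume.restrict (Icc a b))) :=
        lintegral_mono' hmeas le_rfl
    _ = (K : ℝ≥0∞) * ∫⁻ t in Icc a b, q (f t) := by
        rw [lintegral_map hq hf.measurable, lintegral_smul_measure, smul_eq_mul]

lemma graph_lintegral_ge {u : ℝ → ℝ} (hu : Continuous u) {a b : ℝ}
    (q : EuclideanSpace ℝ (Fin 2) → ℝ≥0∞) (hq : Measurable q) :
    ∫⁻ t in Icc a b, q (pt2 t (u t))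
      ≤ ∫⁻ x in (fun t => pt2 t (u t)) '' Icc a b, q x ∂μH[1] := by
  set f : ℝ → EuclideanSpace ℝ (Fin 2) := fun t => pt2 t (u t) with hfdef
  have hf : Continuous f := continuous_pt2.comp (continuous_id.prodMk hu)
  set Γ : Set (EuclideanSpace ℝ (Fin 2)) := f '' Icc a b with hΓdef
  have hΓm : MeasurableSet Γ := ((isCompact_Icc.image hf)).measurableSet
  set proj : EuclideanSpace ℝ (Fin 2) → ℝ := fun x => x 0 with hprojdef
  have hprojm : Measurable proj := proj_lipschitz.continuous.measurable
  have hmeas : volume.restrict (Icc a b) ≤ Measure.map proj (μH[1].restrict Γ) := by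
    refine Measure.le_iff.2 fun A hA => ?_
    rw [Measure.restrict_apply hA, Measure.map_apply hprojm hA,
      Measure.restrict_apply (hprojm hA)]
    calc volume (A ∩ Icc a b) = μH[1] (A ∩ Icc a b) := by
          rw [MeasureTheory.hausdorffMeasure_real]
      _ ≤ μH[1] (proj '' (proj ⁻¹' A ∩ Γ)) := by
          apply measure_mono
          rintro t ⟨htA, ht⟩
          exact ⟨f t, ⟨htA, ⟨t, ht, rfl⟩⟩, rfl⟩
      _ ≤ (1 : ℝ≥0∞) ^ (1:ℝ) * μH[1] (proj ⁻¹' A ∩ Γ) := by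
          simpa using proj_lipschitz.hausdorffMeasure_image_le zero_le_one (proj ⁻¹' A ∩ Γ)
      _ = μH[1] (proj ⁻¹' A ∩ Γ) := by simp
  have hqf : Measurable fun t => q (pt2 t (u t)) :=
    hq.comp hf.measurable
  calc ∫⁻ t in Icc a b, q (f t)
      ≤ ∫⁻ t, q (pt2 t (u t)) ∂(Measure.map proj (μH[1].restrict Γ)) :=
        lintegral_mono' hmeas le_rfl
    _ = ∫⁻ x in Γ, q (pt2 (proj x) (u (proj x))) ∂μH[1] := lintegral_map hqf hprojm
    _ = ∫⁻ x in Γ, q x ∂μH[1] := by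
        apply setLIntegral_congr_fun hΓm
        rintro x ⟨t, ht, rfl⟩
        simp [hprojdef, hfdef]

lemma norm_gradient_eq (ψ : EuclideanSpace ℝ (Fin 2) → ℝ) (x : EuclideanSpace ℝ (Fin 2)) :
    ‖gradient ψ x‖ = ‖fderiv ℝ ψ x‖ := by
  unfold gradient
  exact LinearIsometryEquiv.norm_map _ _

lemma continuous_gradient {ψ : EuclideanSpace ℝ (Fin 2) → ℝ} (hψ : ContDiff ℝ 1 ψ) :
    Continuous (gradient ψ) := by
  unfold gradient
  exact (LinearIsometryEquiv.continuous _).comp (hψ.continuous_fderiv one_ne_zero)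

lemma vertical_step (γ : ℝ) (hγ : 0 ≤ γ) (ψ : EuclideanSpace ℝ (Fin 2) → ℝ)
    (hψ : ContDiff ℝ 1 ψ) (t a b : ℝ) (hab : a ≤ b) (hba : b ≤ a + γ) :
    ψ (pt2 t a)^2 ≤ 2 * ψ (pt2 t b)^2
      + 2 * γ * ∫ s in Ioo a b, ‖gradient ψ (pt2 t s)‖^2 := by
  classical
  set v : EuclideanSpace ℝ (Fin 2) := pt2 0 1 with hv
  have hnv : ‖v‖ = 1 := by
    rw [EuclideanSpace.norm_eq]
    simp [Fin.sum_univ_two, hv]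
  have hline : ∀ s : ℝ, HasDerivAt (fun s : ℝ => pt2 t s) v s := by
    intro s
    have heq : (fun s : ℝ => pt2 t s) = fun s : ℝ => pt2 t 0 + s • v := by
      funext s
      ext i
      fin_cases i <;> simp [hv, pt2] <;> rfl
    rw [heq]
    have h1 : HasDerivAt (fun s : ℝ => s • v) v s := by
      simpa using (hasDerivAt_id s).smul_const v
    exact h1.const_add (pt2 t 0)
  set d : ℝ → ℝ := fun s => (fderiv ℝ ψ (pt2 t s)) v with hd
  have hcurve : Continuous fun s : ℝ => pt2 t s :=
    continuous_pt2.comp (continuous_const.prodMk continuous_id)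
  have hdc : Continuous d :=
    (((hψ.continuous_fderiv one_ne_zero).comp hcurve).clm_apply continuous_const)
  have hderiv : ∀ s : ℝ, HasDerivAt (fun s : ℝ => ψ (pt2 t s)) (d s) s := fun s =>
    ((hψ.differentiable one_ne_zero).differentiableAt.hasFDerivAt).comp_hasDerivAt s (hline s)
  have hbound : ∀ s : ℝ, |d s| ≤ ‖gradient ψ (pt2 t s)‖ := by
    intro s
    rw [norm_gradient_eq]
    calc |d s| = ‖(fderiv ℝ ψ (pt2 t s)) v‖ := rfl
      _ ≤ ‖fderiv ℝ ψ (pt2 t s)‖ * ‖v‖ := ContinuousLinearMap.le_opNorm _ _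
      _ = ‖fderiv ℝ ψ (pt2 t s)‖ := by rw [hnv, mul_one]
  have hftc : ∫ s in a..b, d s = ψ (pt2 t b) - ψ (pt2 t a) :=
    intervalIntegral.integral_eq_sub_of_hasDerivAt (fun s _ => hderiv s)
      (hdc.intervalIntegrable a b)
  set D : ℝ := ∫ s in Ioo a b, d s with hDdef
  have hDeq : ψ (pt2 t a) = ψ (pt2 t b) - D := by
    have : ∫ s in a..b, d s = D := by
      rw [intervalIntegral.integral_of_le hab, MeasureTheory.integral_Ioc_eq_integral_Ioo]
    linarith [hftc, this]
  -- Cauchy-Schwarz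
  haveI hfin : IsFiniteMeasure (volume.restrict (Ioo a b)) :=
    ⟨by rw [Measure.restrict_apply_univ]; exact measure_Ioo_lt_top⟩
  set I2 : ℝ := ∫ s in Ioo a b, (d s)^2 with hI2def
  have hI2nonneg : 0 ≤ I2 := integral_nonneg fun s => sq_nonneg _
  obtain ⟨M, hM⟩ := isCompact_Icc.exists_bound_of_continuousOn
    (hdc.continuousOn : ContinuousOn d (Icc a b))
  have hmemd : MemLp (fun s => |d s|) (ENNReal.ofReal 2) (volume.restrict (Ioo a b)) := by
    apply MemLp.of_bound (hdc.abs.aestronglyMeasurable) M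
    filter_upwards [ae_restrict_mem measurableSet_Ioo] with s hs
    rw [Real.norm_eq_abs, abs_abs, ← Real.norm_eq_abs]
    exact hM s (Ioo_subset_Icc_self hs)
  have hmem1 : MemLp (fun _ : ℝ => (1:ℝ)) (ENNReal.ofReal 2) (volume.restrict (Ioo a b)) :=
    memLp_const 1
  have hpq : Real.HolderConjugate 2 2 := Real.HolderConjugate.two_two
  have hcs := integral_mul_le_Lp_mul_Lq_of_nonneg hpq
    (ae_of_all _ fun _ => zero_le_one) (ae_of_all _ fun s => abs_nonneg (d s)) hmem1 hmemd
  have habs2 : ∀ x : ℝ, |x| ^ (2:ℝ) = x^2 := by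
    intro x
    rw [show (2:ℝ) = ((2:ℕ):ℝ) by norm_num, Real.rpow_natCast, sq_abs]
  have hone2 : ∀ᵐ s ∂(volume.restrict (Ioo a b)), True := ae_of_all _ fun _ => trivial
  have hconst : (∫ s in Ioo a b, (1:ℝ) ^ (2:ℝ)) = b - a := by
    simp only [Real.one_rpow]
    rw [setIntegral_const, measureReal_def, Real.volume_Ioo, smul_eq_mul, mul_one,
      ENNReal.toReal_ofReal (by linarith)]
  have hDle : |D| ≤ Real.sqrt (b - a) * Real.sqrt I2 := by
    have h1 : |D| ≤ ∫ s in Ioo a b, |d s| := by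
      simpa [Real.norm_eq_abs] using MeasureTheory.norm_integral_le_integral_norm (f := d)
        (μ := volume.restrict (Ioo a b))
    have h2 : (∫ s in Ioo a b, (1:ℝ) * |d s|) = ∫ s in Ioo a b, |d s| := by
      simp
    have h3 : (∫ s in Ioo a b, |d s| ^ (2:ℝ)) = I2 := by
      rw [hI2def]
      congr 1
      funext s
      exact habs2 (d s)
    rw [h2, hconst, h3] at hcs
    calc |D| ≤ ∫ s in Ioo a b, |d s| := h1
      _ ≤ (b - a) ^ ((1:ℝ)/2) * I2 ^ ((1:ℝ)/2) := hcs
      _ = Real.sqrt (b - a) * Real.sqrt I2 := by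
        rw [Real.sqrt_eq_rpow, Real.sqrt_eq_rpow]
  have hDsq : D^2 ≤ (b - a) * I2 := by
    have hR : 0 ≤ Real.sqrt (b - a) * Real.sqrt I2 := by positivity
    have := mul_self_le_mul_self (abs_nonneg D) hDle
    calc D^2 = |D| * |D| := by rw [sq]; exact (abs_mul_abs_self D).symm
      _ ≤ (Real.sqrt (b-a) * Real.sqrt I2) * (Real.sqrt (b-a) * Real.sqrt I2) := this
      _ = (Real.sqrt (b-a) * Real.sqrt (b-a)) * (Real.sqrt I2 * Real.sqrt I2) := by ring
      _ = (b - a) * I2 := by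
        rw [Real.mul_self_sqrt (by linarith), Real.mul_self_sqrt hI2nonneg]
  set w : ℝ := ∫ s in Ioo a b, ‖gradient ψ (pt2 t s)‖^2 with hwdef
  have hgradc : Continuous fun s : ℝ => ‖gradient ψ (pt2 t s)‖^2 :=
    (((continuous_gradient hψ).comp hcurve).norm).pow 2
  have hwI2 : I2 ≤ w := by
    apply setIntegral_mono_on
    · exact ((hdc.pow 2).continuousOn.integrableOn_compact isCompact_Icc).mono_set
        Ioo_subset_Icc_self
    · exact (hgradc.continuousOn.integrableOn_compact isCompact_Icc).mono_set
        Ioo_subset_Icc_self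
    · exact measurableSet_Ioo
    · intro s _
      have h := hbound s
      calc (d s)^2 = |d s|^2 := (sq_abs _).symm
        _ ≤ ‖gradient ψ (pt2 t s)‖^2 := by
            apply pow_le_pow_left₀ (abs_nonneg _) h
  have hwnonneg : 0 ≤ w := integral_nonneg fun s => sq_nonneg _
  have hDγ : D^2 ≤ γ * w := by
    calc D^2 ≤ (b - a) * I2 := hDsq
      _ ≤ γ * w := mul_le_mul (by linarith) hwI2 hI2nonneg hγ
  have hsq : ψ (pt2 t a)^2 = (ψ (pt2 t b) - D)^2 := by rw [hDeq]
  nlinarith [sq_nonneg (ψ (pt2 t b) + D), hDγ, hsq]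

lemma tonelli_region (T : ℝ) (gb Gb : ℝ → ℝ) (hgb : Continuous gb) (hGb : Continuous Gb)
    (F : EuclideanSpace ℝ (Fin 2) → ℝ≥0∞) (hF : Measurable F) :
    ∫⁻ t in Ioo (0:ℝ) T, ∫⁻ s in Ioo (gb t) (Gb t), F (pt2 t s)
      = ∫⁻ x in {x : EuclideanSpace ℝ (Fin 2) |
          x 0 ∈ Ioo (0:ℝ) T ∧ x 1 ∈ Ioo (gb (x 0)) (Gb (x 0))}, F x := by
  classical
  set e : EuclideanSpace ℝ (Fin 2) ≃ᵐ ℝ × ℝ :=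
    (MeasurableEquiv.toLp 2 (Fin 2 → ℝ)).symm.trans MeasurableEquiv.finTwoArrow with he
  have mp : MeasurePreserving e volume volume :=
    (volume_preserving_finTwoArrow ℝ).comp
      (EuclideanSpace.volume_preserving_symm_measurableEquiv_toLp (Fin 2))
  have he_symm : ∀ p : ℝ × ℝ, e.symm p = pt2 p.1 p.2 := by
    intro p
    ext i
    fin_cases i <;> rfl
  set S' : Set (ℝ × ℝ) := {p : ℝ × ℝ | p.1 ∈ Ioo (0:ℝ) T ∧ p.2 ∈ Ioo (gb p.1) (Gb p.1)}
    with hS'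
  have hS'm : MeasurableSet S' :=
    measurableSet_regionBetween hgb.measurable hGb.measurable measurableSet_Ioo
  have himg : e.symm '' S' = {x : EuclideanSpace ℝ (Fin 2) |
      x 0 ∈ Ioo (0:ℝ) T ∧ x 1 ∈ Ioo (gb (x 0)) (Gb (x 0))} := by
    ext x
    constructor
    · rintro ⟨p, hp, rfl⟩
      rw [he_symm p]
      exact hp
    · intro hx
      refine ⟨(x 0, x 1), hx, ?_⟩
      rw [he_symm]
      exact pt2_eta x
  set h : ℝ × ℝ → ℝ≥0∞ := fun p => F (e.symm p) with hh
  have hhm : Measurable h := hF.comp e.symm.measurable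
  have step1 : ∫⁻ p in S', h p = ∫⁻ x in {x : EuclideanSpace ℝ (Fin 2) |
      x 0 ∈ Ioo (0:ℝ) T ∧ x 1 ∈ Ioo (gb (x 0)) (Gb (x 0))}, F x := by
    rw [← himg]
    exact (mp.symm e).setLIntegral_comp_emb e.symm.measurableEmbedding F S'
  rw [← step1]
  rw [← lintegral_indicator hS'm, Measure.volume_eq_prod,
    lintegral_prod _ ((hhm.indicator hS'm).aemeasurable)]
  have key : ∀ t : ℝ, (∫⁻ s, S'.indicator h (t, s))
      = (Ioo (0:ℝ) T).indicator
          (fun t => ∫⁻ s in Ioo (gb t) (Gb t), F (pt2 t s)) t := by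
    intro t
    by_cases ht : t ∈ Ioo (0:ℝ) T
    · rw [indicator_of_mem ht]
      have : (fun s => S'.indicator h (t, s))
          = (Ioo (gb t) (Gb t)).indicator (fun s => F (pt2 t s)) := by
        funext s
        by_cases hs : s ∈ Ioo (gb t) (Gb t)
        · rw [indicator_of_mem hs, indicator_of_mem (show (t,s) ∈ S' from ⟨ht, hs⟩)]
          rw [hh]
          simp only []
          rw [he_symm]
        · rw [indicator_of_notMem hs,
            indicator_of_notMem (fun hmem => hs (hmem.2 : _))]
      rw [this, lintegral_indicator measurableSet_Ioo]
    · rw [indicator_of_notMem ht]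
      have : (fun s => S'.indicator h (t, s)) = fun _ => 0 :=
        funext fun s => indicator_of_notMem (fun hmem => ht (hmem.1 : _)) _
      rw [this, lintegral_zero]
  symm
  calc ∫⁻ t, ∫⁻ s, S'.indicator h (t, s)
      = ∫⁻ t, (Ioo (0:ℝ) T).indicator
          (fun t => ∫⁻ s in Ioo (gb t) (Gb t), F (pt2 t s)) t := by
        congr 1; funext t; exact key t
    _ = ∫⁻ t in Ioo (0:ℝ) T, ∫⁻ s in Ioo (gb t) (Gb t), F (pt2 t s) :=
        lintegral_indicator measurableSet_Ioo _

/-- Arc-length weighted trace estimate (estimates (s2)–(s3) in the proof of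
Lemma 1, single-rectangle form). -/
theorem arclength_weighted_trace_estimate
    (γ T L : ℝ) (hγ : 0 < γ) (hT : 0 < T) (hL : 0 ≤ L)
    (g G : ℝ → ℝ)
    (hg : ContDiffOn ℝ 1 g (Icc 0 T)) (hG : ContDiffOn ℝ 1 G (Icc 0 T))
    (hgG : ∀ t ∈ Icc (0:ℝ) T, g t ≤ G t ∧ G t ≤ g t + γ)
    (hg' : ∀ t ∈ Icc (0:ℝ) T, |derivWithin g (Icc 0 T) t| ≤ L)
    (Γg ΓG : Set (EuclideanSpace ℝ (Fin 2)))
    (hΓg : Γg = (fun t => pt2 t (g t)) '' Icc (0:ℝ) T)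
    (hΓG : ΓG = (fun t => pt2 t (G t)) '' Icc (0:ℝ) T)
    (S : Set (EuclideanSpace ℝ (Fin 2)))
    (hS : S = {x : EuclideanSpace ℝ (Fin 2) |
        x 0 ∈ Ioo (0:ℝ) T ∧ x 1 ∈ Ioo (g (x 0)) (G (x 0))})
    (ψ : EuclideanSpace ℝ (Fin 2) → ℝ) (hψ : ContDiff ℝ 1 ψ) :
    (∫ x in Γg, (ψ x)^2 ∂(μH[1]))
      ≤ 2 * Real.sqrt (1 + L^2) *
        ((∫ x in ΓG, (ψ x)^2 ∂(μH[1])) + γ * ∫ x in S, ‖gradient ψ x‖^2) := by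
  classical
  -- clamp map and continuous extensions of g, G
  set c : ℝ → ℝ := fun t => max 0 (min t T) with hcdef
  have hccont : Continuous c := continuous_const.max (continuous_id.min continuous_const)
  have hcmem : ∀ t, c t ∈ Icc (0:ℝ) T := by
    intro t
    constructor
    · exact le_max_left _ _
    · exact max_le (hT.le) (min_le_right _ _)
  have hceq : ∀ t ∈ Icc (0:ℝ) T, c t = t := by
    rintro t ⟨h0, h1⟩
    simp [hcdef, min_eq_left h1, max_eq_right h0]
  set gb : ℝ → ℝ := fun t => g (c t) with hgbdef
  set Gb : ℝ → ℝ := fun t => G (c t) with hGbdef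
  have hgbc : Continuous gb := (hg.continuousOn).comp_continuous hccont hcmem
  have hGbc : Continuous Gb := (hG.continuousOn).comp_continuous hccont hcmem
  have hgbeq : ∀ t ∈ Icc (0:ℝ) T, gb t = g t := fun t ht => by rw [hgbdef]; simp [hceq t ht]
  have hGbeq : ∀ t ∈ Icc (0:ℝ) T, Gb t = G t := fun t ht => by rw [hGbdef]; simp [hceq t ht]
  -- picture in terms of gb, Gb
  have hΓg' : Γg = (fun t => pt2 t (gb t)) '' Icc (0:ℝ) T := by
    rw [hΓg]
    exact (image_congr fun t ht => by rw [hgbeq t ht]).symm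
  have hΓG' : ΓG = (fun t => pt2 t (Gb t)) '' Icc (0:ℝ) T := by
    rw [hΓG]
    exact (image_congr fun t ht => by rw [hGbeq t ht]).symm
  have hS' : S = {x : EuclideanSpace ℝ (Fin 2) |
      x 0 ∈ Ioo (0:ℝ) T ∧ x 1 ∈ Ioo (gb (x 0)) (Gb (x 0))} := by
    rw [hS]
    ext x
    simp only [mem_setOf_eq]
    constructor
    · rintro ⟨h1, h2⟩
      refine ⟨h1, ?_⟩
      rwa [hgbeq _ (Ioo_subset_Icc_self h1), hGbeq _ (Ioo_subset_Icc_self h1)]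
    · rintro ⟨h1, h2⟩
      refine ⟨h1, ?_⟩
      rwa [hgbeq _ (Ioo_subset_Icc_self h1), hGbeq _ (Ioo_subset_Icc_self h1)] at h2
  -- Lipschitz bounds
  have hglipR : ∀ x ∈ Icc (0:ℝ) T, ∀ y ∈ Icc (0:ℝ) T, |gb x - gb y| ≤ L * |x - y| := by
    intro x hx y hy
    rw [hgbeq x hx, hgbeq y hy]
    have := Convex.norm_image_sub_le_of_norm_derivWithin_le
      (hg.differentiableOn one_ne_zero) (fun z hz => by simpa using hg' z hz)
      (convex_Icc 0 T) hy hx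
    simpa [Real.norm_eq_abs] using this
  have hglip : LipschitzOnWith (Real.toNNReal (Real.sqrt (1 + L^2)))
      (fun t => pt2 t (gb t)) (Icc (0:ℝ) T) := curve_lipschitz hL hglipR
  obtain ⟨CG0, hCG0⟩ := isCompact_Icc.exists_bound_of_continuousOn
    (hG.continuousOn_derivWithin (uniqueDiffOn_Icc hT) le_rfl)
  set CG : ℝ := max CG0 0 with hCGdef
  have hCGnn : 0 ≤ CG := le_max_right _ _
  have hGlipR : ∀ x ∈ Icc (0:ℝ) T, ∀ y ∈ Icc (0:ℝ) T, |Gb x - Gb y| ≤ CG * |x - y| := by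
    intro x hx y hy
    rw [hGbeq x hx, hGbeq y hy]
    have := Convex.norm_image_sub_le_of_norm_derivWithin_le
      (hG.differentiableOn one_ne_zero)
      (fun z hz => le_trans (hCG0 z hz) (le_max_left CG0 0))
      (convex_Icc 0 T) hy hx
    simpa [Real.norm_eq_abs] using this
  have hGlip : LipschitzOnWith (Real.toNNReal (Real.sqrt (1 + CG^2)))
      (fun t => pt2 t (Gb t)) (Icc (0:ℝ) T) := curve_lipschitz hCGnn hGlipR
  -- integrands
  set q : EuclideanSpace ℝ (Fin 2) → ℝ≥0∞ := fun x => ENNReal.ofReal ((ψ x)^2) with hqdef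
  have hqm : Measurable q := (hψ.continuous.pow 2).measurable.ennreal_ofReal
  set p : EuclideanSpace ℝ (Fin 2) → ℝ≥0∞ :=
    fun x => ENNReal.ofReal (‖gradient ψ x‖^2) with hpdef
  have hpm : Measurable p :=
    (((continuous_gradient hψ).norm.pow 2).measurable).ennreal_ofReal
  -- Step A
  have hA : ∫⁻ x in Γg, q x ∂μH[1]
      ≤ (Real.toNNReal (Real.sqrt (1 + L^2)) : ℝ≥0∞)
        * ∫⁻ t in Icc (0:ℝ) T, q (pt2 t (gb t)) := by
    rw [hΓg']
    exact graph_lintegral_le hgbc hglip q hqm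
  -- Step B
  have hB : ∫⁻ t in Icc (0:ℝ) T, q (pt2 t (Gb t)) ≤ ∫⁻ x in ΓG, q x ∂μH[1] := by
    rw [hΓG']
    exact graph_lintegral_ge hGbc q hqm
  -- Tonelli
  set Wfun : ℝ → ℝ≥0∞ := fun t => ∫⁻ s in Ioo (gb t) (Gb t), p (pt2 t s) with hWdef
  have hTon : ∫⁻ t in Icc (0:ℝ) T, Wfun t = ∫⁻ x in S, p x := by
    rw [← Measure.restrict_congr_set Ioo_ae_eq_Icc, hS']
    exact tonelli_region T gb Gb hgbc hGbc p hpm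
  -- pointwise vertical estimate
  have hptwise : ∀ t ∈ Icc (0:ℝ) T,
      q (pt2 t (gb t)) ≤ 2 * q (pt2 t (Gb t)) + (2 * ENNReal.ofReal γ) * Wfun t := by
    intro t ht
    have hab : gb t ≤ Gb t := by
      rw [hgbeq t ht, hGbeq t ht]; exact (hgG t ht).1
    have hba : Gb t ≤ gb t + γ := by
      rw [hgbeq t ht, hGbeq t ht]; exact (hgG t ht).2
    have hvs := vertical_step γ hγ.le ψ hψ t (gb t) (Gb t) hab hba
    set w : ℝ := ∫ s in Ioo (gb t) (Gb t), ‖gradient ψ (pt2 t s)‖^2 with hwdef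
    have hwnn : 0 ≤ w := integral_nonneg fun s => sq_nonneg _
    have hcurve : Continuous fun s : ℝ => pt2 t s :=
      continuous_pt2.comp (continuous_const.prodMk continuous_id)
    have hwint : IntegrableOn (fun s => ‖gradient ψ (pt2 t s)‖^2)
        (Ioo (gb t) (Gb t)) := by
      have hcont : Continuous fun s : ℝ => ‖gradient ψ (pt2 t s)‖^2 :=
        ((continuous_gradient hψ).comp hcurve).norm.pow 2
      exact (hcont.continuousOn.integrableOn_compact isCompact_Icc).mono_set
        Ioo_subset_Icc_self
    have hofw : ENNReal.ofReal w = Wfun t := by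
      rw [hwdef, MeasureTheory.ofReal_integral_eq_lintegral_ofReal hwint
        (ae_of_all _ fun s => sq_nonneg _)]
    calc q (pt2 t (gb t))
        ≤ ENNReal.ofReal (2 * ψ (pt2 t (Gb t))^2 + 2 * γ * w) :=
          ENNReal.ofReal_le_ofReal hvs
      _ = ENNReal.ofReal (2 * ψ (pt2 t (Gb t))^2) + ENNReal.ofReal (2 * γ * w) :=
          ENNReal.ofReal_add (by positivity) (by positivity)
      _ = 2 * q (pt2 t (Gb t)) + (2 * ENNReal.ofReal γ) * Wfun t := by
          rw [← hofw, hqdef]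
          rw [ENNReal.ofReal_mul (by norm_num : (0:ℝ) ≤ 2),
            mul_assoc, ENNReal.ofReal_mul (by norm_num : (0:ℝ) ≤ 2),
            ENNReal.ofReal_mul hγ.le]
          norm_num [mul_assoc]
  -- step C: integrate the pointwise bound
  have hC : ∫⁻ t in Icc (0:ℝ) T, q (pt2 t (gb t))
      ≤ 2 * (∫⁻ t in Icc (0:ℝ) T, q (pt2 t (Gb t)))
        + (2 * ENNReal.ofReal γ) * ∫⁻ x in S, p x := by
    have h1 : ∫⁻ t in Icc (0:ℝ) T, q (pt2 t (gb t))
        ≤ ∫⁻ t in Icc (0:ℝ) T,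
            (2 * q (pt2 t (Gb t)) + (2 * ENNReal.ofReal γ) * Wfun t) := by
      apply lintegral_mono_ae
      rw [ae_restrict_iff' measurableSet_Icc]
      exact ae_of_all _ hptwise
    have hmeas2 : Measurable fun t => 2 * q (pt2 t (Gb t)) := by
      apply Measurable.const_mul
      exact hqm.comp (continuous_pt2.comp (continuous_id.prodMk hGbc)).measurable
    rw [lintegral_add_left hmeas2, lintegral_const_mul' 2 _ (by norm_num),
      lintegral_const_mul' _ _ (by
        exact ENNReal.mul_ne_top (by norm_num) ENNReal.ofReal_ne_top), hTon] at h1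
    exact h1
  -- finiteness facts
  have hIGfin : ∫⁻ t in Icc (0:ℝ) T, q (pt2 t (Gb t)) ≠ ⊤ := by
    obtain ⟨M1, hM1⟩ := isCompact_Icc.exists_bound_of_continuousOn
      (((hψ.continuous.comp (continuous_pt2.comp
        (continuous_id.prodMk hGbc))).pow 2).continuousOn
          : ContinuousOn (fun t => ψ (pt2 t (Gb t))^2) (Icc (0:ℝ) T))
    have hle : ∫⁻ t in Icc (0:ℝ) T, q (pt2 t (Gb t))
        ≤ ∫⁻ _ in Icc (0:ℝ) T, ENNReal.ofReal M1 := by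
      apply setLIntegral_mono measurable_const
      intro t ht
      exact ENNReal.ofReal_le_ofReal
        (le_trans (le_abs_self _) (by simpa [Real.norm_eq_abs] using hM1 t ht))
    refine ne_top_of_le_ne_top ?_ hle
    rw [setLIntegral_const]
    exact ENNReal.mul_ne_top ENNReal.ofReal_ne_top (measure_Icc_lt_top).ne
  have hAGfin : ∫⁻ x in ΓG, q x ∂μH[1] ≠ ⊤ := by
    have h1 : ∫⁻ x in ΓG, q x ∂μH[1]
        ≤ (Real.toNNReal (Real.sqrt (1 + CG^2)) : ℝ≥0∞)
          * ∫⁻ t in Icc (0:ℝ) T, q (pt2 t (Gb t)) := by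
      rw [hΓG']
      exact graph_lintegral_le hGbc hGlip q hqm
    refine ne_top_of_le_ne_top ?_ h1
    exact ENNReal.mul_ne_top ENNReal.coe_ne_top hIGfin
  have hBfin : ∫⁻ x in S, p x ≠ ⊤ := by
    rw [← hTon]
    -- bound Wfun uniformly
    obtain ⟨R1, hR1⟩ := isCompact_Icc.exists_bound_of_continuousOn hgbc.continuousOn
    obtain ⟨R2, hR2⟩ := isCompact_Icc.exists_bound_of_continuousOn hGbc.continuousOn
    set R : ℝ := max R1 R2 with hRdef
    have hKbox : IsCompact ((fun pr : ℝ × ℝ => pt2 pr.1 pr.2) ''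
        (Icc (0:ℝ) T ×ˢ Icc (-R) R)) :=
      (isCompact_Icc.prod isCompact_Icc).image continuous_pt2
    obtain ⟨M2, hM2⟩ := hKbox.exists_bound_of_continuousOn
      (((continuous_gradient hψ).norm.pow 2).continuousOn)
    have hWle : ∀ t ∈ Icc (0:ℝ) T, Wfun t ≤ ENNReal.ofReal M2 * ENNReal.ofReal γ := by
      intro t ht
      have hsub : ∀ s ∈ Ioo (gb t) (Gb t), s ∈ Icc (-R) R := by
        intro s hs
        constructor
        · have h1 : |gb t| ≤ R1 := by simpa [Real.norm_eq_abs] using hR1 t ht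
          have h1' := (abs_le.1 h1).1
          have hRR : R1 ≤ R := le_max_left _ _
          have hRR' : -R ≤ -R1 := neg_le_neg hRR
          linarith [hs.1]
        · have := abs_le.1 (by simpa [Real.norm_eq_abs] using hR2 t ht : |Gb t| ≤ R2)
          have h2 : Gb t ≤ R2 := this.2
          have : R2 ≤ R := le_max_right _ _
          linarith [hs.2]
      calc Wfun t ≤ ∫⁻ _ in Ioo (gb t) (Gb t), ENNReal.ofReal M2 := by
            apply setLIntegral_mono measurable_const
            intro s hs
            apply ENNReal.ofReal_le_ofReal
            refine le_trans (le_abs_self _) ?_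
            have := hM2 (pt2 t s) ⟨(t, s), ⟨ht, hsub s hs⟩, rfl⟩
            simpa [Real.norm_eq_abs] using this
        _ = ENNReal.ofReal M2 * volume (Ioo (gb t) (Gb t)) := setLIntegral_const _ _
        _ ≤ ENNReal.ofReal M2 * ENNReal.ofReal γ := by
            apply mul_le_mul_right
            rw [Real.volume_Ioo]
            apply ENNReal.ofReal_le_ofReal
            have h1 : gb t ≤ Gb t := by
              rw [hgbeq t ht, hGbeq t ht]; exact (hgG t ht).1
            have h2 : Gb t ≤ gb t + γ := by
              rw [hgbeq t ht, hGbeq t ht]; exact (hgG t ht).2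
            linarith
    have hle : ∫⁻ t in Icc (0:ℝ) T, Wfun t
        ≤ ∫⁻ _ in Icc (0:ℝ) T, ENNReal.ofReal M2 * ENNReal.ofReal γ :=
      setLIntegral_mono measurable_const hWle
    refine ne_top_of_le_ne_top ?_ hle
    rw [setLIntegral_const]
    exact ENNReal.mul_ne_top
      (ENNReal.mul_ne_top ENNReal.ofReal_ne_top ENNReal.ofReal_ne_top)
      (measure_Icc_lt_top).ne
  -- full ENNReal chain
  set K : ℝ≥0∞ := (Real.toNNReal (Real.sqrt (1 + L^2)) : ℝ≥0∞) with hKdef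
  have hKofReal : K = ENNReal.ofReal (Real.sqrt (1 + L^2)) := rfl
  have hKne : K ≠ ⊤ := ENNReal.coe_ne_top
  set AG : ℝ≥0∞ := ∫⁻ x in ΓG, q x ∂μH[1] with hAGdef
  set B : ℝ≥0∞ := ∫⁻ x in S, p x with hBdef
  have hchain : ∫⁻ x in Γg, q x ∂μH[1]
      ≤ K * (2 * AG + (2 * ENNReal.ofReal γ) * B) := by
    refine le_trans hA ?_
    apply mul_le_mul_right
    refine le_trans hC ?_
    exact add_le_add_left (mul_le_mul_right hB 2) _
  have hRHSne : K * (2 * AG + (2 * ENNReal.ofReal γ) * B) ≠ ⊤ := by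
    apply ENNReal.mul_ne_top hKne
    apply ENNReal.add_ne_top.2
    constructor
    · exact ENNReal.mul_ne_top (by norm_num) hAGfin
    · exact ENNReal.mul_ne_top
        (ENNReal.mul_ne_top (by norm_num) ENNReal.ofReal_ne_top) hBfin
  -- convert to real integrals
  have hψm : AEStronglyMeasurable (fun x => (ψ x)^2)
      ((μH[1] : Measure (EuclideanSpace ℝ (Fin 2))).restrict Γg) :=
    (hψ.continuous.pow 2).aestronglyMeasurable
  have hLHS : (∫ x in Γg, (ψ x)^2 ∂(μH[1]))
      = (∫⁻ x in Γg, q x ∂μH[1]).toReal := by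
    rw [integral_eq_lintegral_of_nonneg_ae (ae_of_all _ fun x => sq_nonneg _) hψm]
  have hAGr : (∫ x in ΓG, (ψ x)^2 ∂(μH[1])) = AG.toReal := by
    rw [hAGdef, integral_eq_lintegral_of_nonneg_ae (ae_of_all _ fun x => sq_nonneg _)
      (hψ.continuous.pow 2).aestronglyMeasurable]
  have hBr : (∫ x in S, ‖gradient ψ x‖^2) = B.toReal := by
    rw [hBdef, integral_eq_lintegral_of_nonneg_ae (ae_of_all _ fun x => sq_nonneg _)
      ((continuous_gradient hψ).norm.pow 2).aestronglyMeasurable]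
  rw [hLHS, hAGr, hBr]
  refine le_trans (ENNReal.toReal_mono hRHSne hchain) ?_
  rw [ENNReal.toReal_mul, ENNReal.toReal_add
      (ENNReal.mul_ne_top (by norm_num) hAGfin)
      (ENNReal.mul_ne_top (ENNReal.mul_ne_top (by norm_num) ENNReal.ofReal_ne_top) hBfin),
    ENNReal.toReal_mul, ENNReal.toReal_mul, ENNReal.toReal_mul, hKofReal,
    ENNReal.toReal_ofReal (Real.sqrt_nonneg _), ENNReal.toReal_ofReal hγ.le]
  simp only [ENNReal.toReal_ofNat]
  ring_nf
  apply le_of_eq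
  ring
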